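/- For k = 4p+2 with p ≥ 0, the map f defined by f(v_{2i+1}) = i+1 for 0 ≤ i ≤ 2p and f(v_{2i}) = 4p+3-i for 1 ≤ i ≤ 2p+1 is a bijection onto {1,...,4p+2} and is a graceful difference labeling of the circuit C_{4p+2}. -/

import Mathlib

/-- Cyclic successor on `Fin k`. -/
def cyc (k : ℕ) (hk : 0 < k) (i : Fin k) : Fin k := ⟨(i.val + 1) % k, Nat.mod_lt _ hk⟩

/-- `f` is a graceful difference labeling of the digraph with arc set `A`:
`f` is a bijection from the vertices onto `{1,…,|V|}` and the arc labels
`f v - f u` are pairwise distinct. -/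
def IsGdlOn {V : Type} [Fintype V] (A : Set (V × V)) (f : V → ℤ) : Prop :=
  Set.BijOn f Set.univ (Set.Icc 1 (Fintype.card V : ℤ)) ∧
  Set.InjOn (fun a : V × V => f a.2 - f a.1) A

/-- Arc set of the directed circuit on `Fin k`. -/
def circuitArcs (k : ℕ) (hk : 0 < k) : Set (Fin k × Fin k) :=
  Set.range (fun i => (i, cyc k hk i))

/-- The labeling of `C_{4p+2}` from Lemma 1, case `k = 4p+2`.
Vertex `v_{j+1}` is the index `j : Fin (4p+2)`:
`f(v_{2i+1}) = i+1` for `0 ≤ i ≤ 2p`, `f(v_{2i}) = 4p+3-i` for `1 ≤ i ≤ 2p+1`. -/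
def f8 (p : ℕ) (j : Fin (4 * p + 2)) : ℤ :=
  if j.val % 2 = 0 then (j.val / 2 : ℕ) + 1
  else 4 * (p : ℤ) + 3 - ((j.val + 1) / 2 : ℕ)


lemma D_eq (p : ℕ) (hk : 0 < 4 * p + 2) (i : Fin (4 * p + 2)) :
    f8 p (cyc (4 * p + 2) hk i) - f8 p i =
      if i.val % 2 = 0 then 4 * (p : ℤ) + 1 - i.val
      else if i.val = 4 * p + 1 then -(2 * (p : ℤ) + 1)
      else (i.val : ℤ) - 4 * p - 1 := by
  have hi := i.isLt
  by_cases h : i.val = 4 * p + 1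
  · have h1 : (i.val + 1) % (4 * p + 2) = 0 := by
      have : i.val + 1 = 4 * p + 2 := by omega
      rw [this, Nat.mod_self]
    simp only [cyc, f8, h1]
    split_ifs <;> push_cast <;> omega
  · have h1 : (i.val + 1) % (4 * p + 2) = i.val + 1 := Nat.mod_eq_of_lt (by omega)
    simp only [cyc, f8, h1]
    split_ifs <;> push_cast <;> omega

theorem stmt_8 (p : ℕ) :
    IsGdlOn (circuitArcs (4 * p + 2) (by omega)) (f8 p) := by
  have hcard : (Fintype.card (Fin (4 * p + 2)) : ℤ) = 4 * (p : ℤ) + 2 := by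
    push_cast [Fintype.card_fin]; ring
  constructor
  · rw [hcard]
    refine ⟨?_, ?_, ?_⟩
    · intro j _
      have hj := j.isLt
      unfold f8
      split_ifs <;> constructor <;> push_cast <;> omega
    · intro a _ b _ h
      have ha := a.isLt
      have hb := b.isLt
      unfold f8 at h
      apply Fin.ext
      split_ifs at h <;> push_cast at h <;> omega
    · intro y hy
      obtain ⟨hy1, hy2⟩ := hy
      set m := y.toNat with hm
      have hym : y = (m : ℤ) := by omega
      by_cases h : m ≤ 2 * p + 1
      · refine ⟨⟨2 * (m - 1), by omega⟩, trivial, ?_⟩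
        unfold f8
        split_ifs with h2 <;> push_cast [Fin.val_mk] at h2 ⊢ <;> omega
      · refine ⟨⟨8 * p + 5 - 2 * m, by omega⟩, trivial, ?_⟩
        unfold f8
        have hm2 : m ≤ 4 * p + 2 := by omega
        split_ifs with h2 <;> push_cast [Fin.val_mk] at h2 ⊢ <;> omega
  · intro x hx y hy h
    obtain ⟨i, rfl⟩ := hx
    obtain ⟨i', rfl⟩ := hy
    simp only at h
    rw [D_eq, D_eq] at h
    have hi := i.isLt
    have hi' := i'.isLt
    suffices hii : i = i' by rw [hii]
    apply Fin.ext
    split_ifs at h <;> omega
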